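/- Let β > 0 and let a be a real number with |a| < β. Then 0 ≤ 2β ∫₀^a artanh(t/β) dt ≤ β² (artanh(a/β))². -/

import Mathlib

open intervalIntegral

/-- The inverse hyperbolic tangent on (-1, 1). -/
noncomputable def artanh (x : ℝ) : ℝ := Real.log ((1 + x) / (1 - x)) / 2

lemma artanh_zero : artanh 0 = 0 := by simp [artanh]

lemma artanh_nonneg {x : ℝ} (h0 : 0 ≤ x) (h1 : x < 1) : 0 ≤ artanh x := by
  unfold artanh
  apply div_nonneg _ (by norm_num)
  apply Real.log_nonneg
  rw [le_div_iff₀ (by linarith)]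
  linarith

lemma artanh_nonpos {x : ℝ} (h0 : x ≤ 0) (h1 : -1 < x) : artanh x ≤ 0 := by
  unfold artanh
  apply div_nonpos_of_nonpos_of_nonneg _ (by norm_num)
  apply Real.log_nonpos
  · exact div_nonneg (by linarith) (by linarith)
  · rw [div_le_one (by linarith)]; linarith

lemma hasDerivAt_artanh {x : ℝ} (hx : |x| < 1) :
    HasDerivAt artanh (1 / (1 - x ^ 2)) x := by
  obtain ⟨h1, h2⟩ := abs_lt.mp hx
  have hp : 0 < 1 + x := by linarith
  have hm : 0 < 1 - x := by linarith
  have hd1 : HasDerivAt (fun y : ℝ => Real.log (1 + y)) (1 / (1 + x)) x := by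
    have := (Real.hasDerivAt_log (ne_of_gt hp)).comp x ((hasDerivAt_id x).const_add 1)
    simpa [one_div, Function.comp_def] using this
  have hd2 : HasDerivAt (fun y : ℝ => Real.log (1 - y)) (-(1 / (1 - x))) x := by
    have := (Real.hasDerivAt_log (ne_of_gt hm)).comp x ((hasDerivAt_id x).const_sub 1)
    simpa [one_div, Function.comp_def] using this
  have hD : HasDerivAt (fun y : ℝ => (Real.log (1 + y) - Real.log (1 - y)) / 2)
      ((1 / (1 + x) - -(1 / (1 - x))) / 2) x := (hd1.sub hd2).div_const 2
  have heq : (fun y : ℝ => (Real.log (1 + y) - Real.log (1 - y)) / 2) =ᶠ[nhds x] artanh := by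
    filter_upwards [Ioo_mem_nhds h1 h2] with y hy
    obtain ⟨hy1, hy2⟩ := hy
    unfold artanh
    rw [Real.log_div (by linarith) (by linarith)]
  have := hD.congr_of_eventuallyEq heq.symm
  refine this.congr_deriv ?_
  have hne : (1:ℝ) - x ^ 2 ≠ 0 := by nlinarith
  field_simp
  ring

/-- two-sided bound on the control penalty
(equations (24)-(26) of the proof of Theorem 1). -/
theorem control_penalty_two_sided_bound (β a : ℝ) (hβ : 0 < β) (ha : |a| < β) :
    0 ≤ 2 * β * ∫ t in (0:ℝ)..a, artanh (t / β) ∧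
      2 * β * ∫ t in (0:ℝ)..a, artanh (t / β) ≤ β ^ 2 * (artanh (a / β)) ^ 2 := by
  set f : ℝ → ℝ := fun t => artanh (t / β) with hf
  set g : ℝ → ℝ := fun t => β * artanh (t / β) / (1 - (t / β) ^ 2) with hg
  have hmem : ∀ t ∈ Set.uIcc (0:ℝ) a, |t / β| < 1 := by
    intro t ht
    rw [Set.mem_uIcc] at ht
    have h1 : |t| ≤ |a| := by
      rcases ht with ⟨h1, h2⟩ | ⟨h1, h2⟩
      · rw [abs_of_nonneg h1]; exact le_trans h2 (le_abs_self a)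
      · rw [abs_of_nonpos h2]; linarith [neg_abs_le a]
    rw [abs_div, abs_of_pos hβ, div_lt_one hβ]
    exact lt_of_le_of_lt h1 ha
  have hden : ∀ t ∈ Set.uIcc (0:ℝ) a, 0 < 1 - (t / β) ^ 2 := by
    intro t ht
    have h := abs_lt.mp (hmem t ht)
    nlinarith [h.1, h.2]
  -- continuity of f and g on uIcc
  have hcontf : ContinuousOn f (Set.uIcc (0:ℝ) a) := by
    have : ContinuousOn (fun t : ℝ => (1 + t / β) / (1 - t / β)) (Set.uIcc (0:ℝ) a) := by
      apply ContinuousOn.div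
      · fun_prop
      · fun_prop
      · intro t ht
        have := abs_lt.mp (hmem t ht)
        intro h; linarith [this.2]
    apply ContinuousOn.div_const
    apply ContinuousOn.log this
    intro t ht
    have := abs_lt.mp (hmem t ht)
    have h1 : 0 < 1 + t / β := by linarith [this.1]
    have h2 : 0 < 1 - t / β := by linarith [this.2]
    positivity
  have hcontg : ContinuousOn g (Set.uIcc (0:ℝ) a) := by
    apply ContinuousOn.div
    · exact (continuousOn_const.mul hcontf)
    · fun_prop
    · intro t ht; exact ne_of_gt (hden t ht)
  have hIf : IntervalIntegrable f MeasureTheory.volume 0 a :=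
    hcontf.intervalIntegrable
  have hIg : IntervalIntegrable g MeasureTheory.volume 0 a :=
    hcontg.intervalIntegrable
  -- integral of g
  have hG : ∀ t ∈ Set.uIcc (0:ℝ) a,
      HasDerivAt (fun u => β ^ 2 / 2 * artanh (u / β) ^ 2) (g t) t := by
    intro t ht
    have h1 : HasDerivAt (fun u : ℝ => u / β) (1 / β) t := by
      simpa [one_div] using (hasDerivAt_id t).div_const β
    have h2 : HasDerivAt (fun u : ℝ => artanh (u / β))
        (1 / (1 - (t / β) ^ 2) * (1 / β)) t :=
      by have := (hasDerivAt_artanh (hmem t ht)).comp t h1; exact this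
    have h3 := ((h2.pow 2).const_mul (β ^ 2 / 2))
    refine h3.congr_deriv ?_
    have hd := ne_of_gt (hden t ht)
    have hb2 : (0:ℝ) < β ^ 2 := by positivity
    have hne2 : β ^ 2 - t ^ 2 ≠ 0 := by
      have h' := hden t ht
      rw [div_pow] at h'
      have : t ^ 2 < β ^ 2 := (div_lt_one hb2).mp (by linarith)
      linarith
    rw [hg]
    field_simp
    ring
  have hint_g : ∫ t in (0:ℝ)..a, g t = β ^ 2 / 2 * artanh (a / β) ^ 2 := by
    have := intervalIntegral.integral_eq_sub_of_hasDerivAt hG hIg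
    rw [this]
    simp [artanh_zero]
  rcases le_or_gt 0 a with h0a | h0a
  · -- a ≥ 0 case
    have hpt : ∀ t ∈ Set.Icc (0:ℝ) a, β * f t ≤ g t := by
      intro t ht
      have ht' : t ∈ Set.uIcc (0:ℝ) a := Set.Icc_subset_uIcc ht
      have hd := hden t ht'
      have hd1 : 1 - (t / β) ^ 2 ≤ 1 := by nlinarith [sq_nonneg (t / β)]
      have har : 0 ≤ artanh (t / β) := by
        apply artanh_nonneg
        · exact div_nonneg ht.1 hβ.le
        · exact (abs_lt.mp (hmem t ht')).2
      rw [hg, le_div_iff₀ hd]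
      nlinarith [mul_nonneg hβ.le har]
    have hptnn : ∀ t ∈ Set.Icc (0:ℝ) a, 0 ≤ f t := by
      intro t ht
      apply artanh_nonneg (div_nonneg ht.1 hβ.le)
      exact (abs_lt.mp (hmem t (Set.Icc_subset_uIcc ht))).2
    have hnn : 0 ≤ ∫ t in (0:ℝ)..a, f t :=
      intervalIntegral.integral_nonneg h0a hptnn
    constructor
    · positivity
    · have hmono : ∫ t in (0:ℝ)..a, β * f t ≤ ∫ t in (0:ℝ)..a, g t :=
        intervalIntegral.integral_mono_on h0a (hIf.const_mul β) hIg hpt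
      rw [intervalIntegral.integral_const_mul] at hmono
      rw [hint_g] at hmono
      linarith
  · -- a < 0 case
    have hIcc : Set.Icc a 0 ⊆ Set.uIcc (0:ℝ) a := by
      rw [Set.uIcc_comm]; exact Set.Icc_subset_uIcc
    have hpt : ∀ t ∈ Set.Icc a (0:ℝ), g t ≤ β * f t := by
      intro t ht
      have ht' : t ∈ Set.uIcc (0:ℝ) a := hIcc ht
      have hd := hden t ht'
      have hd1 : 1 - (t / β) ^ 2 ≤ 1 := by nlinarith [sq_nonneg (t / β)]
      have har : artanh (t / β) ≤ 0 := by
        apply artanh_nonpos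
        · exact div_nonpos_of_nonpos_of_nonneg ht.2 hβ.le
        · exact (abs_lt.mp (hmem t ht')).1
      rw [hg, div_le_iff₀ hd]
      nlinarith [mul_nonpos_of_nonneg_of_nonpos hβ.le har]
    have hptnp : ∀ t ∈ Set.Icc a (0:ℝ), f t ≤ 0 := by
      intro t ht
      apply artanh_nonpos (div_nonpos_of_nonpos_of_nonneg ht.2 hβ.le)
      exact (abs_lt.mp (hmem t (hIcc ht))).1
    have hsymf : (∫ t in (0:ℝ)..a, f t) = -∫ t in a..(0:ℝ), f t :=
      (intervalIntegral.integral_symm a 0)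
    have hsymg : (∫ t in (0:ℝ)..a, g t) = -∫ t in a..(0:ℝ), g t :=
      (intervalIntegral.integral_symm a 0)
    have hIf' : IntervalIntegrable f MeasureTheory.volume a 0 := hIf.symm
    have hIg' : IntervalIntegrable g MeasureTheory.volume a 0 := hIg.symm
    have hnp : (∫ t in a..(0:ℝ), f t) ≤ 0 := by
      have := intervalIntegral.integral_mono_on h0a.le hIf' intervalIntegrable_const hptnp
      simpa using this
    have hmono : ∫ t in a..(0:ℝ), g t ≤ ∫ t in a..(0:ℝ), β * f t :=
      intervalIntegral.integral_mono_on h0a.le hIg' (hIf'.const_mul β) hpt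
    rw [intervalIntegral.integral_const_mul] at hmono
    constructor
    · rw [hsymf]; nlinarith
    · have : β * (∫ t in (0:ℝ)..a, f t) ≤ ∫ t in (0:ℝ)..a, g t := by
        rw [hsymf, hsymg]; linarith
      rw [hint_g] at this
      linarith
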